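/- arXiv:1401.5428 — 2 statements merged into one kernel-verified Lean document; each statement's English description precedes it below -/
import Mathlib

section
/- The map Φ(z₁,z₂) = (z₁ + (3√3/2)z₂², z₂), restricted to B², belongs to S⁰(B²); i.e., there exists a normal Loewner chain (f_t)_{t≥0} on B² with f₀ = Φ. -/
open Complex

noncomputable section

/-- The open unit ball in `ℂ²`. -/
def B2 : Set (ℂ × ℂ) := {z | ‖z.1‖ ^ 2 + ‖z.2‖ ^ 2 < 1}

/-- A normal Loewner chain on `B²`: a family `(f_t)_{t ≥ 0}` of injective holomorphic maps
`f_t : B² → ℂ²` with increasing images, `f_t(0) = 0`, `d(f_t)₀ = e^t·id`, and such that the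
family `{e^{-t} f_t}` is uniformly bounded on every compact subset of `B²`. -/
def IsNormalLoewnerChain (f : ℝ → ℂ × ℂ → ℂ × ℂ) : Prop :=
  (∀ t, 0 ≤ t → DifferentiableOn ℂ (f t) B2) ∧
  (∀ t, 0 ≤ t → Set.InjOn (f t) B2) ∧
  (∀ s t, 0 ≤ s → s ≤ t → f s '' B2 ⊆ f t '' B2) ∧
  (∀ t, 0 ≤ t → f t 0 = 0) ∧
  (∀ t, 0 ≤ t → ∀ z : ℂ × ℂ, fderiv ℂ (f t) 0 z = Real.exp t • z) ∧
  (∀ K : Set (ℂ × ℂ), K ⊆ B2 → IsCompact K →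
    ∃ M : ℝ, ∀ t, 0 ≤ t → ∀ z ∈ K, ‖Real.exp (-t) • f t z‖ ≤ M)

/-- `f ∈ S⁰(B²)`: `f` admits parametric representation, i.e. `f` is (on `B²`) the initial
element of some normal Loewner chain. -/
def memS0 (f : ℂ × ℂ → ℂ × ℂ) : Prop :=
  ∃ F : ℝ → ℂ × ℂ → ℂ × ℂ, IsNormalLoewnerChain F ∧ ∀ z ∈ B2, F 0 z = f z

/-- The coefficient `a = (1/2)·∂²f₁/∂z₂²(0)` of `z₂²` in the first component of the Taylor
expansion of `f` at the origin. -/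
def shearCoef (f : ℂ × ℂ → ℂ × ℂ) : ℂ :=
  (1 / 2 : ℂ) * iteratedDeriv 2 (fun w : ℂ => (f (0, w)).1) 0

private theorem keylem (l t : ℝ) (hl0 : 0 ≤ l) (hl1 : l ≤ 1) (ht0 : 0 ≤ t) :
    (27/4) * l^2 * t^2 * (2 - t - l) ≤ 1 + l - l^2 := by
  have hp : (0:ℝ) ≤ 3*t+2-l := by linarith
  have h1 : 0 ≤ (1/4) * (l^2 * (3*t+2*l-4)^2) * (3*t+2-l) :=
    mul_nonneg (by positivity) hp
  have h2 : 0 ≤ (1-l)^2 * (1 + 2*(1-l) - (1-l)^2 - (1-l)^3) := by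
    nlinarith [sq_nonneg (1-l), mul_nonneg (sub_nonneg.2 hl1) hl0,
      mul_nonneg (mul_nonneg (sub_nonneg.2 hl1) hl0) hl0]
  nlinarith [h1, h2]

private theorem lemR (l t s r : ℝ) (hl0 : 0 ≤ l) (hl1 : l ≤ 1) (ht0 : 0 ≤ t)
    (hs0 : 0 ≤ s) (hs : s^2 = 1 - t) (hr : r^2 = 3) :
    (l*s + (3*r/2)*(l*(1-l))*t)^2 + l^2*t ≤ 1 := by
  have hk := keylem l t hl0 hl1 ht0
  have h9 : (9/4)*(r^2*(t^2*s^2)) = (27/4)*(t^2*(1-t)) := by rw [hr, hs]; ring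
  have hamgm : 3*r*(t*s) ≤ 1 + (27/4)*(t^2*(1-t)) := by
    nlinarith [sq_nonneg (1 - (3*r/2)*(t*s)), h9]
  have h3 : l^2*(1-l)*(3*r*(t*s)) ≤ l^2*(1-l)*(1 + (27/4)*(t^2*(1-t))) := by
    have : (0:ℝ) ≤ l^2*(1-l) := mul_nonneg (sq_nonneg l) (by linarith)
    exact mul_le_mul_of_nonneg_left hamgm this
  have h4 : (1-l)*((27/4)*l^2*t^2*(2-t-l)) ≤ (1-l)*(1+l-l^2) :=
    mul_le_mul_of_nonneg_left hk (by linarith)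
  have hls : l^2*s^2 = l^2*(1-t) := by rw [hs]
  have h27 : (9/4)*(r^2*(l^2*(1-l)^2*t^2)) = (27/4)*(l^2*(1-l)^2*t^2) := by rw [hr]; ring
  nlinarith [h3, h4, hls, h27]

example : True := trivial

private theorem mem_ball_shear (w : ℂ × ℂ) (hw : w ∈ B2) (l : ℝ) (hl0 : 0 < l) (hl1 : l ≤ 1) :
    ((l : ℂ) * w.1 + ((3 * Real.sqrt 3 / 2 * (l * (1 - l)) : ℝ) : ℂ) * w.2 ^ 2,
      (l : ℂ) * w.2) ∈ B2 := by
  set x := ‖w.1‖ with hxdef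
  set y := ‖w.2‖ with hydef
  have hw' : x ^ 2 + y ^ 2 < 1 := hw
  have hx0 : 0 ≤ x := norm_nonneg _
  have hy0 : 0 ≤ y := norm_nonneg _
  set t := y ^ 2 with htdef
  have ht0 : 0 ≤ t := sq_nonneg _
  have ht1 : t < 1 := by nlinarith [sq_nonneg x]
  set s := Real.sqrt (1 - t) with hsdef
  have hs : s ^ 2 = 1 - t := Real.sq_sqrt (by linarith)
  have hs0 : 0 ≤ s := Real.sqrt_nonneg _
  have hxs : x < s := by
    have hx2 : x ^ 2 < s ^ 2 := by rw [hs]; nlinarith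
    exact lt_of_pow_lt_pow_left₀ 2 hs0 hx2
  set c2 : ℝ := 3 * Real.sqrt 3 / 2 * (l * (1 - l)) with hc2def
  have hc2 : 0 ≤ c2 := by
    have h1l : 0 ≤ 1 - l := by linarith
    rw [hc2def]
    exact mul_nonneg (by positivity) (mul_nonneg hl0.le h1l)
  have hn1 : ‖(l : ℂ) * w.1 + (c2 : ℂ) * w.2 ^ 2‖ ≤ l * x + c2 * t := by
    calc ‖(l : ℂ) * w.1 + (c2 : ℂ) * w.2 ^ 2‖
        ≤ ‖(l : ℂ) * w.1‖ + ‖(c2 : ℂ) * w.2 ^ 2‖ := norm_add_le _ _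
      _ = l * x + c2 * t := by
          simp [norm_mul, norm_pow, Complex.norm_real, Real.norm_eq_abs,
            _root_.abs_of_nonneg hl0.le, _root_.abs_of_nonneg hc2,
            hxdef, hydef, htdef]
  have hn2 : ‖(l : ℂ) * w.2‖ = l * y := by
    simp [norm_mul, Complex.norm_real, Real.norm_eq_abs, _root_.abs_of_nonneg hl0.le,
      hydef]
  show ‖(l : ℂ) * w.1 + (c2 : ℂ) * w.2 ^ 2‖ ^ 2 + ‖(l : ℂ) * w.2‖ ^ 2 < 1
  have hkey := lemR l t s (Real.sqrt 3) hl0.le hl1 ht0 hs0 hs (Real.sq_sqrt (by norm_num))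
  have hkey' : (l * s + c2 * t) ^ 2 + l ^ 2 * t ≤ 1 := by rw [hc2def]; exact hkey
  have hlt : l * x + c2 * t < l * s + c2 * t :=
    add_lt_add_left ((mul_lt_mul_iff_right₀ hl0).2 hxs) _
  have hnn : 0 ≤ l * x + c2 * t := by positivity
  calc ‖(l : ℂ) * w.1 + (c2 : ℂ) * w.2 ^ 2‖ ^ 2 + ‖(l : ℂ) * w.2‖ ^ 2
      ≤ (l * x + c2 * t) ^ 2 + (l * y) ^ 2 := by
        have := pow_le_pow_left₀ (norm_nonneg _) hn1 2
        rw [hn2]; linarith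
    _ < (l * s + c2 * t) ^ 2 + (l * y) ^ 2 := by
        have := pow_lt_pow_left₀ hlt hnn two_ne_zero
        linarith
    _ ≤ 1 := by
        have hyt : (l * y) ^ 2 = l ^ 2 * t := by rw [htdef]; ring
        linarith [hkey']

/-- The map `Φ(z₁,z₂) = (z₁ + (3√3/2) z₂², z₂)` belongs to `S⁰(B²)`. -/
theorem Phi_memS0 :
    memS0 (fun z : ℂ × ℂ => (z.1 + ((3 * Real.sqrt 3 / 2 : ℝ) : ℂ) * z.2 ^ 2, z.2)) := by
  refine ⟨fun u z => (((Real.exp u : ℝ) : ℂ) * (z.1 + ((3 * Real.sqrt 3 / 2 : ℝ) : ℂ) * z.2 ^ 2),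
      ((Real.exp u : ℝ) : ℂ) * z.2), ⟨?_, ?_, ?_, ?_, ?_, ?_⟩, ?_⟩
  · -- differentiability
    intro u _
    apply Differentiable.differentiableOn
    apply Differentiable.prodMk
    · exact (differentiable_fst.add
        ((differentiable_snd.pow 2).const_mul _)).const_mul _
    · exact differentiable_snd.const_mul _
  · -- injectivity
    intro u _ z hz z' hz' h
    have he : ((Real.exp u : ℝ) : ℂ) ≠ 0 := by
      simpa using Real.exp_ne_zero u
    have h1 := congrArg Prod.fst h
    have h2 := congrArg Prod.snd h
    simp only at h1 h2
    have hz2 : z.2 = z'.2 := mul_left_cancel₀ he h2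
    have h1' := mul_left_cancel₀ he h1
    rw [hz2] at h1'
    have hz1 : z.1 = z'.1 := by
      have := add_right_cancel h1'
      exact this
    exact Prod.ext_iff.mpr ⟨hz1, hz2⟩
  · -- increasing images
    intro s t hs hst
    rintro _ ⟨z, hz, rfl⟩
    set l := Real.exp (s - t) with hl
    have hl0 : 0 < l := Real.exp_pos _
    have hl1 : l ≤ 1 := by
      rw [hl]
      calc Real.exp (s - t) ≤ Real.exp 0 := Real.exp_le_exp.mpr (by linarith)
        _ = 1 := Real.exp_zero
    refine ⟨((l : ℂ) * z.1 + ((3 * Real.sqrt 3 / 2 * (l * (1 - l)) : ℝ) : ℂ) * z.2 ^ 2,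
      (l : ℂ) * z.2), mem_ball_shear z hz l hl0 hl1, ?_⟩
    have hre : Real.exp t * l = Real.exp s := by
      rw [hl, ← Real.exp_add]; congr 1; ring
    have hrec : Complex.exp (t : ℂ) * ((l : ℝ) : ℂ) = Complex.exp (s : ℂ) := by
      have h := congrArg (fun x : ℝ => (x : ℂ)) hre
      push_cast at h
      exact h
    simp only [Prod.mk.injEq]
    constructor
    · push_cast
      linear_combination (z.1 + 3 * (Real.sqrt 3 : ℂ) / 2 * z.2 ^ 2) * hrec
    · push_cast
      linear_combination z.2 * hrec
  · -- fixes origin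
    intro t _
    simp
  · -- derivative at origin
    intro u _ z
    have h1 : HasFDerivAt (fun z : ℂ × ℂ => z.1 + ((3 * Real.sqrt 3 / 2 : ℝ) : ℂ) * z.2 ^ 2)
        (ContinuousLinearMap.fst ℂ ℂ ℂ) (0 : ℂ × ℂ) := by
      have hsnd : HasFDerivAt (fun p : ℂ × ℂ => p.2) (ContinuousLinearMap.snd ℂ ℂ ℂ)
          (0 : ℂ × ℂ) := hasFDerivAt_snd
      have hp0 := (hsnd.mul hsnd).const_mul ((3 * Real.sqrt 3 / 2 : ℝ) : ℂ)
      have hp : HasFDerivAt (fun p : ℂ × ℂ => ((3 * Real.sqrt 3 / 2 : ℝ) : ℂ) * p.2 ^ 2)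
          (0 : ℂ × ℂ →L[ℂ] ℂ) (0 : ℂ × ℂ) := by
        have e : (fun p : ℂ × ℂ => ((3 * Real.sqrt 3 / 2 : ℝ) : ℂ) * p.2 ^ 2) =
            fun y => ((3 * Real.sqrt 3 / 2 : ℝ) : ℂ) * ((fun p : ℂ × ℂ => p.2) * fun p : ℂ × ℂ => p.2) y := by
          ext p; simp [pow_two]
        rw [e]
        refine hp0.congr_fderiv ?_
        ext p <;> simp
      have hfst : HasFDerivAt (fun p : ℂ × ℂ => p.1) (ContinuousLinearMap.fst ℂ ℂ ℂ)
          (0 : ℂ × ℂ) := hasFDerivAt_fst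
      exact (hfst.add hp).congr_fderiv (add_zero _)
    have hsnd : HasFDerivAt (fun p : ℂ × ℂ => p.2) (ContinuousLinearMap.snd ℂ ℂ ℂ)
        (0 : ℂ × ℂ) := hasFDerivAt_snd
    have hf := (h1.const_mul ((Real.exp u : ℝ) : ℂ)).prodMk
      (hsnd.const_mul ((Real.exp u : ℝ) : ℂ))
    rw [hf.fderiv]
    simp [Complex.real_smul, Prod.ext_iff, Prod.smul_def]
  · -- normality
    intro K hK hKc
    obtain ⟨M, hM⟩ := hKc.exists_bound_of_continuousOn
      (f := fun z : ℂ × ℂ => (z.1 + ((3 * Real.sqrt 3 / 2 : ℝ) : ℂ) * z.2 ^ 2, z.2))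
      (Continuous.continuousOn (by continuity))
    refine ⟨M, fun u hu z hz => ?_⟩
    have hone : Real.exp (-u) * Real.exp u = 1 := by
      rw [← Real.exp_add]; simp
    have heq : Real.exp (-u) • (((Real.exp u : ℝ) : ℂ) * (z.1 + ((3 * Real.sqrt 3 / 2 : ℝ) : ℂ) * z.2 ^ 2),
        ((Real.exp u : ℝ) : ℂ) * z.2) = (z.1 + ((3 * Real.sqrt 3 / 2 : ℝ) : ℂ) * z.2 ^ 2, z.2) := by
      simp only [Prod.smul_mk, Complex.real_smul, ← mul_assoc, ← Complex.ofReal_mul, hone,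
        Complex.ofReal_one, one_mul]
    rw [heq]
    exact hM z hz
  · -- initial value
    intro z _
    simp [Real.exp_zero]
end
end

section
/- The family f_t(z₁,z₂) := e^t(z₁ + (3√3/2)z₂², z₂), for t ≥ 0 and (z₁,z₂) ∈ B², is a normal Loewner chain on B². In particular, the image Φ(B²), where Φ(z₁,z₂) = (z₁ + (3√3/2)z₂², z₂), is star-shaped with respect to the origin. -/
set_option maxHeartbeats 1000000

open Complex

noncomputable section


lemma Hcore (e r : ℝ) (he0 : 0 ≤ e) (he1 : e ≤ 1) (hr0 : 0 ≤ r) (hr1 : r ≤ 1) :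
    0 ≤ (1-r)^2*(1+3*r) + r^2*e^2*(3-e) - 6*r^2*(1-r)*e := by
  nlinarith [sq_nonneg ((1-r)*2 - r*e), sq_nonneg ((1-r) - r*e), sq_nonneg ((1-r)*3 - 2*r*e),
    mul_nonneg (mul_nonneg hr0 hr0) (mul_nonneg (mul_nonneg he0 he0) (by linarith : (0:ℝ) ≤ 1 - e)),
    mul_nonneg (sub_nonneg.2 hr1) hr0, mul_nonneg (sub_nonneg.2 he1) he0,
    mul_nonneg (mul_nonneg (sub_nonneg.2 hr1) (sub_nonneg.2 hr1)) hr0,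
    mul_nonneg (mul_nonneg hr0 hr0) (mul_nonneg he0 (sub_nonneg.2 he1))]

lemma Bcore (d r : ℝ) (hd0 : -1 ≤ d) (hd1 : d ≤ 4/5) (hr0 : 0 ≤ r) (hr1 : r ≤ 1) :
    0 ≤ (1-r)^2*(1+3*r) + r^2*(1-r)*d*(6-3*d^2-(3/4)*d^3) + r^2*d^2*(3+d) := by
  rcases le_or_gt 0 d with h | h
  · have t1 : 0 ≤ (1-r)^2*(1+3*r) := by positivity
    have t2 : 0 ≤ r^2*(1-r)*d*(6-3*d^2-(3/4)*d^3) := by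
      have : (0:ℝ) ≤ 6-3*d^2-(3/4)*d^3 := by nlinarith
      have h2 : 0 ≤ r^2*(1-r)*d := by
        have := sub_nonneg.2 hr1
        positivity
      exact mul_nonneg h2 this
    have t3 : 0 ≤ r^2*d^2*(3+d) := by
      have : (0:ℝ) ≤ 3+d := by linarith
      positivity
    linarith
  · have hH := Hcore (-d) r (by linarith) (by linarith) hr0 hr1
    have hcor : 0 ≤ r^2*(1-r)*((-d)^3*(3+(3/4)*d)) := by
      have h1 : (0:ℝ) ≤ (-d)^3 := le_of_lt (pow_pos (by linarith : (0:ℝ) < -d) 3)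
      have h2 : (0:ℝ) ≤ 3+(3/4)*d := by linarith
      exact mul_nonneg (mul_nonneg (sq_nonneg r) (sub_nonneg.2 hr1)) (mul_nonneg h1 h2)
    nlinarith [hH, hcor]

lemma F2core (u c r : ℝ) (hu : u^2 = 3) (hu1 : 1 ≤ u) (hu2 : u ≤ 9/5) (hc0 : 0 ≤ c)
    (hc1 : c ≤ 1) (hr0 : 0 ≤ r) (hr1 : r ≤ 1) :
    0 ≤ (1+r) - 3*u*r^2*(1-c^2)*c - (27/4)*r^2*(1-r)*(1-c^2)^2 := by
  have hB := Bcore (u*c-1) r (by nlinarith) (by nlinarith) hr0 hr1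
  have id1 : (1+r) - 3*u*r^2*(1-c^2)*c - (27/4)*r^2*(1-r)*(1-c^2)^2
      = (1-r)^2*(1+3*r) + r^2*(1-r)*(u*c-1)*(6-3*(u*c-1)^2-(3/4)*(u*c-1)^3)
        + r^2*(u*c-1)^2*(3+(u*c-1)) := by
    linear_combination ((-9/2)*c^2*r^2 + (9/2)*c^2*r^3 + (9/4)*c^4*r^2 + (-9/4)*c^4*r^3
      - u*c^3*r^2 + (3/4)*u^2*c^4*r^2 - (3/4)*u^2*c^4*r^3) * hu
  rw [id1]; exact hB

lemma Gcore (u x y r : ℝ) (hu : u^2 = 3) (hu1 : 1 ≤ u) (hu2 : u ≤ 9/5) (hx : 0 ≤ x)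
    (hy : 0 ≤ y) (hr0 : 0 ≤ r) (hr1 : r ≤ 1) (hs : x^2 + y^2 ≤ 1) :
    0 ≤ (1+r)*(x^2+y^2) - 3*u*r^2*x*y^2 - (27/4)*r^2*(1-r)*y^4 := by
  rcases le_or_gt (27*r^2*y^2) (4*(1+r)^2) with h | h
  · have keyA : (1+r)*((1+r)*(x^2+y^2) - 3*u*r^2*x*y^2 - (27/4)*r^2*(1-r)*y^4)
        = ((1+r)*x - (3*u/2)*r^2*y^2)^2 + y^2*((1+r)^2 - (27/4)*r^2*y^2) := by
      linear_combination ((-9/4)*r^4*y^4) * hu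
    nlinarith [keyA, sq_nonneg ((1+r)*x - (3*u/2)*r^2*y^2),
      mul_nonneg (sq_nonneg y) (by linarith : (0:ℝ) ≤ (1+r)^2 - (27/4)*r^2*y^2)]
  · have hy1 : y^2 ≤ 1 := by nlinarith
    have hrpos : 0 < r := by nlinarith
    set c := Real.sqrt (1 - y^2) with hc
    have hc0 : 0 ≤ c := Real.sqrt_nonneg _
    have hcsq : c^2 = 1 - y^2 := Real.sq_sqrt (by linarith)
    have hc1 : c ≤ 1 := by nlinarith
    have hxc : x ≤ c := by nlinarith
    have poly : 0 ≤ 4+8*r-19*r^2+8*r^3+4*r^4 := by nlinarith [sq_nonneg (1-r), sq_nonneg r, mul_nonneg hr0 (sq_nonneg (1-r)), mul_nonneg (mul_nonneg hr0 hr0) (sq_nonneg (1-r))]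
    have step3 : 1 ≤ (1+r^2)*y^2 := by
      nlinarith [mul_lt_mul_of_pos_left h (show (0:ℝ) < 1+r^2 by positivity),
        mul_pos hrpos hrpos]
    have e1 : (2*(1+r)*c)^2 = 4*(1+r)^2*(1-y^2) := by linear_combination (4*(1+r)^2)*hcsq
    have e2 : (3*u*r^2*y^2)^2 = 27*(r^4*y^4) := by linear_combination (9*r^4*y^4)*hu
    have hsq4 : (2*(1+r)*c)^2 ≤ (3*u*r^2*y^2)^2 := by
      rw [e1, e2]
      have p2 : 4*(1+r)^2*(1-y^2) ≤ 4*(1+r)^2*(r^2*y^2) :=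
        mul_le_mul_of_nonneg_left (by linarith) (by positivity)
      have p1 : 4*(1+r)^2*(r^2*y^2) ≤ 27*r^2*y^2*(r^2*y^2) :=
        mul_le_mul_of_nonneg_right h.le (by positivity)
      nlinarith [p1, p2]
    have step4 : 2*(1+r)*c ≤ 3*u*r^2*y^2 := by
      have ha : 0 ≤ 2*(1+r)*c := by positivity
      have hb : 0 ≤ 3*u*r^2*y^2 := by positivity
      calc 2*(1+r)*c = Real.sqrt ((2*(1+r)*c)^2) := (Real.sqrt_sq ha).symm
        _ ≤ Real.sqrt ((3*u*r^2*y^2)^2) := Real.sqrt_le_sqrt hsq4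
        _ = 3*u*r^2*y^2 := Real.sqrt_sq hb
    have hF2 := F2core u c r hu hu1 hu2 hc0 hc1 hr0 hr1
    have idG : (1+r)*(x^2+y^2) - 3*u*r^2*x*y^2 - (27/4)*r^2*(1-r)*y^4
        = ((1+r) - 3*u*r^2*(1-c^2)*c - (27/4)*r^2*(1-r)*(1-c^2)^2)
          + (x-c)*((1+r)*(x+c) - 3*u*r^2*y^2) := by
      have h1 : 1 - c^2 = y^2 := by linarith
      rw [h1]; linear_combination (1+r)*hcsq
    have hprod : 0 ≤ (x-c)*((1+r)*(x+c) - 3*u*r^2*y^2) := by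
      have h1 : x - c ≤ 0 := by linarith
      have h2 : (1+r)*(x+c) - 3*u*r^2*y^2 ≤ 0 := by nlinarith [step4, hxc]
      nlinarith [mul_nonneg (neg_nonneg.2 h1) (neg_nonneg.2 h2)]
    linarith [hF2, hprod, idG.ge, idG.le]

lemma keyIneq (x y r : ℝ) (hx : 0 ≤ x) (hy : 0 ≤ y) (hr0 : 0 ≤ r) (hr1 : r ≤ 1)
    (hs : x^2 + y^2 ≤ 1) :
    (r*x + (3*Real.sqrt 3/2)*(r*(1-r))*y^2)^2 + (r*y)^2 ≤ x^2 + y^2 := by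
  have hu : (Real.sqrt 3)^2 = 3 := Real.sq_sqrt (by norm_num)
  have hu0 : 0 ≤ Real.sqrt 3 := Real.sqrt_nonneg _
  have hu1 : 1 ≤ Real.sqrt 3 := by nlinarith
  have hu2 : Real.sqrt 3 ≤ 9/5 := by nlinarith
  have hG := Gcore (Real.sqrt 3) x y r hu hu1 hu2 hx hy hr0 hr1 hs
  have key : x^2 + y^2 - ((r*x + (3*Real.sqrt 3/2)*(r*(1-r))*y^2)^2 + (r*y)^2)
      = (1-r)*((1+r)*(x^2+y^2) - 3*(Real.sqrt 3)*r^2*x*y^2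
        - (27/4)*r^2*(1-r)*y^4) := by
    linear_combination (-(9/4)*r^2*(1-r)^2*y^4) * hu
  nlinarith [mul_nonneg (sub_nonneg.2 hr1) hG, key.ge, key.le]

/-- Key membership step: for `z ∈ B2` and `r ∈ [0,1]`, the point
`w = (r z₁ + a r(1-r) z₂², r z₂)` lies in `B2`. -/
lemma step_mem (z : ℂ × ℂ) (hz : z ∈ B2) (r : ℝ) (hr0 : 0 ≤ r) (hr1 : r ≤ 1) :
    (((r:ℂ) * z.1 + ((3 * Real.sqrt 3 / 2 : ℝ) : ℂ) * ((r*(1-r) : ℝ) : ℂ) * z.2 ^ 2,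
      (r:ℂ) * z.2) : ℂ × ℂ) ∈ B2 := by
  have hz' : ‖z.1‖ ^ 2 + ‖z.2‖ ^ 2 < 1 := hz
  have ha : (0:ℝ) ≤ 3 * Real.sqrt 3 / 2 := by positivity
  have hb : (0:ℝ) ≤ r*(1-r) := mul_nonneg hr0 (by linarith)
  have e0 : ‖(r:ℂ) * z.1‖ = r * ‖z.1‖ := by
    rw [norm_mul, Complex.norm_real, Real.norm_eq_abs, _root_.abs_of_nonneg hr0]
  have e1 : ‖((3 * Real.sqrt 3 / 2 : ℝ) : ℂ) * ((r*(1-r) : ℝ) : ℂ) * z.2 ^ 2‖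
      = (3 * Real.sqrt 3 / 2) * (r*(1-r)) * ‖z.2‖^2 := by
    rw [norm_mul, norm_mul, norm_pow, Complex.norm_real, Complex.norm_real,
      Real.norm_eq_abs, Real.norm_eq_abs, _root_.abs_of_nonneg ha, _root_.abs_of_nonneg hb]
  have e2 : ‖(r:ℂ) * z.2‖ = r * ‖z.2‖ := by
    rw [norm_mul, Complex.norm_real, Real.norm_eq_abs, _root_.abs_of_nonneg hr0]
  have h1 : ‖(r:ℂ) * z.1 + ((3 * Real.sqrt 3 / 2 : ℝ) : ℂ) * ((r*(1-r) : ℝ) : ℂ) * z.2 ^ 2‖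
      ≤ r*‖z.1‖ + (3 * Real.sqrt 3 / 2)*(r*(1-r))*‖z.2‖^2 := by
    calc ‖(r:ℂ) * z.1 + ((3 * Real.sqrt 3 / 2 : ℝ) : ℂ) * ((r*(1-r) : ℝ) : ℂ) * z.2 ^ 2‖
        ≤ ‖(r:ℂ) * z.1‖ + ‖((3 * Real.sqrt 3 / 2 : ℝ) : ℂ) * ((r*(1-r) : ℝ) : ℂ) * z.2 ^ 2‖ :=
          norm_add_le _ _
      _ = r*‖z.1‖ + (3 * Real.sqrt 3 / 2)*(r*(1-r))*‖z.2‖^2 := by rw [e0, e1]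
  have key := keyIneq ‖z.1‖ ‖z.2‖ r (norm_nonneg _) (norm_nonneg _) hr0 hr1 hz'.le
  have hnn : (0:ℝ) ≤ r*‖z.1‖ + (3 * Real.sqrt 3 / 2)*(r*(1-r))*‖z.2‖^2 :=
    add_nonneg (mul_nonneg hr0 (norm_nonneg _))
      (mul_nonneg (mul_nonneg ha hb) (sq_nonneg _))
  have h1' : ‖(r:ℂ) * z.1 + ((3 * Real.sqrt 3 / 2 : ℝ) : ℂ) * ((r*(1-r) : ℝ) : ℂ) * z.2 ^ 2‖^2
      ≤ (r*‖z.1‖ + (3 * Real.sqrt 3 / 2)*(r*(1-r))*‖z.2‖^2)^2 := by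
    nlinarith [norm_nonneg ((r:ℂ) * z.1 + ((3 * Real.sqrt 3 / 2 : ℝ) : ℂ) * ((r*(1-r) : ℝ) : ℂ) * z.2 ^ 2)]
  show ‖_‖^2 + ‖_‖^2 < 1
  rw [e2]
  nlinarith [key, h1', hz']

/-- `r • Φ z` is `Φ w` for an explicit `w ∈ B2`. -/
lemma smul_mem' (z : ℂ × ℂ) (hz : z ∈ B2) (r : ℝ) (hr0 : 0 ≤ r) (hr1 : r ≤ 1) :
    ∃ w ∈ B2, ((w.1 + ((3 * Real.sqrt 3 / 2 : ℝ) : ℂ) * w.2 ^ 2, w.2) : ℂ × ℂ)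
      = r • ((z.1 + ((3 * Real.sqrt 3 / 2 : ℝ) : ℂ) * z.2 ^ 2, z.2) : ℂ × ℂ) := by
  refine ⟨(((r:ℂ) * z.1 + ((3 * Real.sqrt 3 / 2 : ℝ) : ℂ) * ((r*(1-r) : ℝ) : ℂ) * z.2 ^ 2,
      (r:ℂ) * z.2) : ℂ × ℂ), step_mem z hz r hr0 hr1, ?_⟩
  refine Prod.ext ?_ ?_ <;>
    simp only [Prod.smul_fst, Prod.smul_snd, Complex.real_smul] <;> push_cast <;> ring

/-- The family `f_t = e^t Φ`, with `Φ(z₁,z₂) = (z₁ + (3√3/2) z₂², z₂)`, is a normal Loewner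
chain on `B²`; in particular `Φ(B²)` is star-shaped with respect to the origin. -/
theorem Phi_chain_and_starlike :
    IsNormalLoewnerChain (fun t z =>
      Real.exp t • (((z.1 + ((3 * Real.sqrt 3 / 2 : ℝ) : ℂ) * z.2 ^ 2, z.2)) : ℂ × ℂ)) ∧
    StarConvex ℝ (0 : ℂ × ℂ)
      ((fun z : ℂ × ℂ => (z.1 + ((3 * Real.sqrt 3 / 2 : ℝ) : ℂ) * z.2 ^ 2, z.2)) '' B2) := by
  constructor
  · refine ⟨?_, ?_, ?_, ?_, ?_, ?_⟩
    · -- differentiability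
      intro t _
      have : Differentiable ℂ (fun z : ℂ × ℂ =>
          Real.exp t • (((z.1 + ((3 * Real.sqrt 3 / 2 : ℝ) : ℂ) * z.2 ^ 2, z.2)) : ℂ × ℂ)) := by
        apply Differentiable.fun_const_smul
        exact (differentiable_fst.add ((differentiable_snd.pow 2).const_mul _)).prodMk
          differentiable_snd
      exact this.differentiableOn
    · -- injectivity
      intro t _ z _ w _ h
      have hne : (Real.exp t) ≠ 0 := (Real.exp_pos t).ne'
      have h2 : ((z.1 + ((3 * Real.sqrt 3 / 2 : ℝ) : ℂ) * z.2 ^ 2, z.2) : ℂ × ℂ)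
          = (w.1 + ((3 * Real.sqrt 3 / 2 : ℝ) : ℂ) * w.2 ^ 2, w.2) :=
        smul_right_injective (ℂ × ℂ) hne h
      rw [Prod.ext_iff] at h2
      obtain ⟨h4, h3⟩ := h2
      simp only at h4 h3
      refine Prod.ext ?_ h3
      rw [h3] at h4
      simpa using h4
    · -- increasing images
      intro s t hs hst
      rintro _ ⟨z, hz, rfl⟩
      have hr0 : 0 ≤ Real.exp (s - t) := (Real.exp_pos _).le
      have hr1 : Real.exp (s - t) ≤ 1 := Real.exp_le_one_iff.2 (by linarith)
      obtain ⟨w, hw, hweq⟩ := smul_mem' z hz (Real.exp (s - t)) hr0 hr1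
      refine ⟨w, hw, ?_⟩
      dsimp only
      rw [hweq, smul_smul, ← Real.exp_add]
      norm_num
    · -- maps 0 to 0
      intro t _
      simp
    · -- derivative at 0
      intro t _ z
      have h2 : HasFDerivAt (fun z : ℂ × ℂ => z.2 ^ 2) (0 : (ℂ × ℂ) →L[ℂ] ℂ) (0 : ℂ × ℂ) := by
        have := (hasFDerivAt_snd (𝕜 := ℂ) (E := ℂ) (F := ℂ) (p := (0 : ℂ × ℂ))).fun_mul
          (hasFDerivAt_snd (𝕜 := ℂ) (E := ℂ) (F := ℂ) (p := (0 : ℂ × ℂ)))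
        simpa [pow_two] using this.congr_fderiv (g' := 0) (by ext z <;> simp)
      have h1 : HasFDerivAt (fun z : ℂ × ℂ => z.1 + ((3 * Real.sqrt 3 / 2 : ℝ) : ℂ) * z.2 ^ 2)
          (ContinuousLinearMap.fst ℂ ℂ ℂ) (0 : ℂ × ℂ) := by
        have := (hasFDerivAt_fst (𝕜 := ℂ) (E := ℂ) (F := ℂ) (p := (0 : ℂ × ℂ))).fun_add
          (h2.const_mul ((3 * Real.sqrt 3 / 2 : ℝ) : ℂ))
        simpa using this.congr_fderiv (g' := ContinuousLinearMap.fst ℂ ℂ ℂ) (by ext z <;> simp)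
      have h3 : HasFDerivAt (fun z : ℂ × ℂ =>
            ((z.1 + ((3 * Real.sqrt 3 / 2 : ℝ) : ℂ) * z.2 ^ 2, z.2) : ℂ × ℂ))
          ((ContinuousLinearMap.fst ℂ ℂ ℂ).prod (ContinuousLinearMap.snd ℂ ℂ ℂ)) (0 : ℂ × ℂ) :=
        h1.prodMk hasFDerivAt_snd
      have h4 : HasFDerivAt (fun z : ℂ × ℂ =>
            Real.exp t • (((z.1 + ((3 * Real.sqrt 3 / 2 : ℝ) : ℂ) * z.2 ^ 2, z.2)) : ℂ × ℂ))
          (Real.exp t • ((ContinuousLinearMap.fst ℂ ℂ ℂ).prod (ContinuousLinearMap.snd ℂ ℂ ℂ)))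
          (0 : ℂ × ℂ) := h3.const_smul (Real.exp t)
      rw [h4.fderiv]
      simp [ContinuousLinearMap.smul_apply]
    · -- uniform bound
      intro K hK _
      refine ⟨5, fun t _ z hz => ?_⟩
      have hzB : z ∈ B2 := hK hz
      have hz' : ‖z.1‖ ^ 2 + ‖z.2‖ ^ 2 < 1 := hzB
      have hz1 : ‖z.1‖ ≤ 1 := by nlinarith [norm_nonneg z.1, norm_nonneg z.2]
      have hz2 : ‖z.2‖ ≤ 1 := by nlinarith [norm_nonneg z.1, norm_nonneg z.2]
      have hcollapse : Real.exp (-t) • Real.exp t •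
          (((z.1 + ((3 * Real.sqrt 3 / 2 : ℝ) : ℂ) * z.2 ^ 2, z.2)) : ℂ × ℂ)
          = (((z.1 + ((3 * Real.sqrt 3 / 2 : ℝ) : ℂ) * z.2 ^ 2, z.2)) : ℂ × ℂ) := by
        rw [smul_smul, ← Real.exp_add]
        norm_num
      dsimp only
      rw [hcollapse]
      have hs3 : Real.sqrt 3 ≤ 2 := by
        nlinarith [Real.sq_sqrt (by norm_num : (0:ℝ) ≤ 3), Real.sqrt_nonneg 3]
      have ha : (0:ℝ) ≤ 3 * Real.sqrt 3 / 2 := by positivity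
      have e1 : ‖((3 * Real.sqrt 3 / 2 : ℝ) : ℂ) * z.2 ^ 2‖
          = (3 * Real.sqrt 3 / 2) * ‖z.2‖^2 := by
        rw [norm_mul, norm_pow, Complex.norm_real, Real.norm_eq_abs, _root_.abs_of_nonneg ha]
      have hfst : ‖z.1 + ((3 * Real.sqrt 3 / 2 : ℝ) : ℂ) * z.2 ^ 2‖ ≤ 5 := by
        calc ‖z.1 + ((3 * Real.sqrt 3 / 2 : ℝ) : ℂ) * z.2 ^ 2‖
            ≤ ‖z.1‖ + ‖((3 * Real.sqrt 3 / 2 : ℝ) : ℂ) * z.2 ^ 2‖ := norm_add_le _ _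
          _ = ‖z.1‖ + (3 * Real.sqrt 3 / 2) * ‖z.2‖^2 := by rw [e1]
          _ ≤ 5 := by nlinarith [norm_nonneg z.2, Real.sqrt_nonneg 3]
      rw [Prod.norm_def]
      exact max_le hfst (by linarith)
  · -- starlikeness
    intro p hp a b ha hb hab
    rw [smul_zero, zero_add]
    obtain ⟨z, hz, rfl⟩ := hp
    obtain ⟨w, hw, hweq⟩ := smul_mem' z hz b hb (by linarith)
    exact ⟨w, hw, hweq⟩
end
end
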